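/- The polynomial potential H(V,W) = V²/2 + VW²/2 + W⁴/4 satisfies the five integrability conditions H_VVVV·H_VV = 2H_VVV², H_VVVW·H_VV = 2H_VVW·H_VVV, H_VVWW·H_VV = 2H_VVW², H_VWWW·H_VV = 3H_VWW·H_VVW − H_WWW·H_VVV, and H_WWWW·H_VV = 6H_VWW² − 4H_WWW·H_VVW. -/

import Mathlib

noncomputable def pV (f : ℝ → ℝ → ℝ) : ℝ → ℝ → ℝ := fun v w => deriv (fun x => f x w) v
noncomputable def pW (f : ℝ → ℝ → ℝ) : ℝ → ℝ → ℝ := fun v w => deriv (fun y => f v y) w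

/-- The five integrability conditions for a potential `H(V,W)` at the point `(v, w)`.
Subscripts: `H_VVW = ∂³H/∂V²∂W`, etc. -/
def IntCond (H : ℝ → ℝ → ℝ) (v w : ℝ) : Prop :=
  pV (pV (pV (pV H))) v w * pV (pV H) v w = 2 * (pV (pV (pV H)) v w) ^ 2 ∧
  pW (pV (pV (pV H))) v w * pV (pV H) v w =
    2 * pW (pV (pV H)) v w * pV (pV (pV H)) v w ∧
  pW (pW (pV (pV H))) v w * pV (pV H) v w = 2 * (pW (pV (pV H)) v w) ^ 2 ∧
  pW (pW (pW (pV H))) v w * pV (pV H) v w =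
    3 * pW (pW (pV H)) v w * pW (pV (pV H)) v w -
      pW (pW (pW H)) v w * pV (pV (pV H)) v w ∧
  pW (pW (pW (pW H))) v w * pV (pV H) v w =
    6 * (pW (pW (pV H)) v w) ^ 2 - 4 * pW (pW (pW H)) v w * pW (pV (pV H)) v w

theorem stmt_1 :
    ∀ v w : ℝ, IntCond (fun V W => V ^ 2 / 2 + V * W ^ 2 / 2 + W ^ 4 / 4) v w := by
  have hV : pV (fun V W => V ^ 2 / 2 + V * W ^ 2 / 2 + W ^ 4 / 4)
      = fun v w => v + w ^ 2 / 2 := by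
    funext v w
    simp (disch := fun_prop) [pV, deriv_add, deriv_div_const, deriv_mul, deriv_pow]
    ring
  have hW : pW (fun V W => V ^ 2 / 2 + V * W ^ 2 / 2 + W ^ 4 / 4)
      = fun v w => v * w + w ^ 3 := by
    funext v w
    simp (disch := fun_prop) [pW, deriv_add, deriv_div_const, deriv_mul, deriv_pow,
      deriv_const_mul]
    ring
  have hVV : pV (fun v w : ℝ => v + w ^ 2 / 2) = fun _ _ => (1 : ℝ) := by
    funext v w
    simp (disch := fun_prop) [pV, deriv_add]
  have hVW : pW (fun v w : ℝ => v + w ^ 2 / 2) = fun _ w => w := by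
    funext v w
    simp (disch := fun_prop) [pW, deriv_add, deriv_div_const, deriv_pow]
    ring
  have hWW : pW (fun v w : ℝ => v * w + w ^ 3) = fun v w => v + 3 * w ^ 2 := by
    funext v w
    simp (disch := fun_prop) [pW, deriv_add, deriv_const_mul, deriv_pow,
      deriv_const_mul_field, deriv_id'']
  have hC : ∀ c : ℝ, pV (fun _ _ : ℝ => c) = fun _ _ => (0 : ℝ) := by
    intro c; funext v w; simp [pV]
  have hCW : ∀ c : ℝ, pW (fun _ _ : ℝ => c) = fun _ _ => (0 : ℝ) := by
    intro c; funext v w; simp [pW]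
  have hIdW : pW (fun _ w : ℝ => w) = fun _ _ => (1 : ℝ) := by
    funext v w; simp [pW]
  have hIdV : pV (fun _ w : ℝ => w) = fun _ _ => (0 : ℝ) := by
    funext v w; simp [pV]
  have hWWW : pW (fun v w : ℝ => v + 3 * w ^ 2) = fun _ w => 6 * w := by
    funext v w
    simp (disch := fun_prop) [pW, deriv_add, deriv_const_mul, deriv_pow]
    ring
  have hWWWW : pW (fun _ w : ℝ => 6 * w) = fun _ _ => (6 : ℝ) := by
    funext v w
    simp only [pW]
    rw [deriv_const_mul_field]
    simp
  intro v w
  refine ⟨?_, ?_, ?_, ?_, ?_⟩ <;>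
    simp [hV, hW, hVV, hVW, hWW, hWWW, hWWWW, hC, hCW, hIdW, hIdV]
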